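/- Let (G,p) be a stress-free framework in ℝ^d, where G=(V,E). If |V| ≥ d, then |E| ≤ d·|V| − d(d+1)/2. -/

import Mathlib

noncomputable section

open Finset

section MaxwellAux

/-- A plain bilinear pairing on `V → Fin k → ℝ`. -/
def mxPair {V : Type*} [Fintype V] {k : ℕ} (x y : V → Fin k → ℝ) : ℝ :=
  ∑ v, ∑ m, x v m * y v m

lemma mxPair_sum_left {V : Type*} [Fintype V] {k : ℕ} {ι : Type*} [Fintype ι]
    (c : ι → ℝ) (f : ι → V → Fin k → ℝ) (y : V → Fin k → ℝ) :
    mxPair (∑ i, c i • f i) y = ∑ i, c i * mxPair (f i) y := by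
  unfold mxPair
  have : ∀ v, ∑ m, (∑ i, c i • f i) v m * y v m
      = ∑ i, ∑ m, c i * (f i v m * y v m) := by
    intro v
    rw [Finset.sum_comm]
    congr 1; funext m
    simp [Finset.sum_mul, mul_assoc]
  rw [Finset.sum_congr rfl fun v _ => this v, Finset.sum_comm]
  congr 1; funext i
  rw [Finset.mul_sum]
  congr 1; funext v
  rw [Finset.mul_sum]

lemma mxPair_sum_right {V : Type*} [Fintype V] {k : ℕ} {ι : Type*} [Fintype ι]
    (c : ι → ℝ) (f : ι → V → Fin k → ℝ) (y : V → Fin k → ℝ) :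
    mxPair y (∑ i, c i • f i) = ∑ i, c i * mxPair y (f i) := by
  unfold mxPair
  have : ∀ v, ∑ m, y v m * (∑ i, c i • f i) v m
      = ∑ i, ∑ m, c i * (y v m * f i v m) := by
    intro v
    rw [Finset.sum_comm]
    congr 1; funext m
    simp [Finset.mul_sum]
    congr 1; funext i
    ring
  rw [Finset.sum_congr rfl fun v _ => this v, Finset.sum_comm]
  congr 1; funext i
  rw [Finset.mul_sum]
  congr 1; funext v
  rw [Finset.mul_sum]

lemma mxPair_self_eq_zero {V : Type*} [Fintype V] {k : ℕ} {x : V → Fin k → ℝ}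
    (h : mxPair x x = 0) : x = 0 := by
  have h1 : ∀ v ∈ (univ : Finset V), ∑ m, x v m * x v m = 0 := by
    rw [← Finset.sum_eq_zero_iff_of_nonneg]
    · exact h
    · intro v _
      exact Finset.sum_nonneg fun m _ => mul_self_nonneg _
  funext v m
  have h2 := (Finset.sum_eq_zero_iff_of_nonneg
    (fun m _ => mul_self_nonneg (x v m))).1 (h1 v (mem_univ v)) m (mem_univ m)
  simpa [mul_self_eq_zero] using h2


lemma triv_indep {V : Type*} [Fintype V] [Nonempty V] {k : ℕ} (q : V → Fin k → ℝ)
    (hspan : Submodule.span ℝ (Set.range fun vw : V × V => q vw.1 - q vw.2) = ⊤) :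
    LinearIndependent ℝ (Sum.elim
      (fun m : Fin k => (fun _ : V => Pi.single m (1:ℝ)))
      (fun pa : {pa : Fin k × Fin k // pa.1 < pa.2} =>
        (fun v : V => Pi.single pa.1.1 (q v pa.1.2) - Pi.single pa.1.2 (q v pa.1.1)))) := by
  rw [Fintype.linearIndependent_iff]
  intro g hg
  set φ : Fin k → ((Fin k → ℝ) →ₗ[ℝ] ℝ) := fun m0 =>
    ∑ pa : {pa : Fin k × Fin k // pa.1 < pa.2}, g (Sum.inr pa) •
      ((if m0 = pa.1.1 then (LinearMap.proj pa.1.2 : (Fin k → ℝ) →ₗ[ℝ] ℝ) else 0)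
        - (if m0 = pa.1.2 then (LinearMap.proj pa.1.1 : (Fin k → ℝ) →ₗ[ℝ] ℝ) else 0)) with hφ
  have hφapp : ∀ m0 x, φ m0 x = ∑ pa : {pa : Fin k × Fin k // pa.1 < pa.2}, g (Sum.inr pa) *
      ((if m0 = pa.1.1 then x pa.1.2 else 0) - (if m0 = pa.1.2 then x pa.1.1 else 0)) := by
    intro m0 x
    rw [hφ]
    rw [LinearMap.sum_apply]
    congr 1; funext pa
    simp only [LinearMap.smul_apply, LinearMap.sub_apply, smul_eq_mul]
    congr 2 <;> split_ifs <;> simp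
  have key : ∀ v m0, g (Sum.inl m0) + φ m0 (q v) = 0 := by
    intro v m0
    have h0 := congrFun (congrFun hg v) m0
    rw [Fintype.sum_sum_type] at h0
    simp only [Finset.sum_apply, Pi.add_apply, Pi.smul_apply, Pi.sub_apply, Pi.zero_apply,
      Sum.elim_inl, Sum.elim_inr, Pi.single_apply, smul_eq_mul, mul_ite, mul_one, mul_zero,
      Finset.sum_ite_eq, Finset.mem_univ, if_true] at h0
    rw [hφapp]
    exact h0
  have hker : ∀ m0 x, φ m0 x = 0 := by
    intro m0
    have hle : Submodule.span ℝ (Set.range fun vw : V × V => q vw.1 - q vw.2)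
        ≤ LinearMap.ker (φ m0) := by
      rw [Submodule.span_le]
      rintro x ⟨⟨v, w⟩, rfl⟩
      simp only [SetLike.mem_coe, LinearMap.mem_ker, map_sub]
      have h1 := key v m0
      have h2 := key w m0
      linarith
    exact fun x => hle (hspan.symm ▸ Submodule.mem_top)
  have hpair : ∀ pa : {pa : Fin k × Fin k // pa.1 < pa.2}, g (Sum.inr pa) = 0 := by
    rintro ⟨⟨pi, pj⟩, hp⟩
    have h := hker pi (Pi.single pj 1)
    rw [hφapp, Finset.sum_eq_single (⟨(pi, pj), hp⟩ : {pa : Fin k × Fin k // pa.1 < pa.2})] at h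
    · simpa [Pi.single_apply, (hp.ne : pi ≠ pj)] using h
    · rintro ⟨⟨bi, bj⟩, hbo⟩ _ hb
      have e3 : (pi : ℕ) < pj := hp
      have e4 : (bi : ℕ) < bj := hbo
      rcases eq_or_ne pi bi with h1 | h1
      · rcases eq_or_ne bj pj with h2 | h2
        · exact absurd (Subtype.ext (Prod.ext h1.symm h2)) hb
        · have h3 : pi ≠ bj := by
            intro u
            have u1 : (pi : ℕ) = bi := congrArg Fin.val h1
            have u2 : (pi : ℕ) = bj := congrArg Fin.val u
            omega
          simp [Pi.single_apply, h2, h3]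
      · rcases eq_or_ne pi bj with h2 | h2
        · have h3 : bi ≠ pj := by
            intro u
            have u1 : (pi : ℕ) = bj := congrArg Fin.val h2
            have u2 : (bi : ℕ) = pj := congrArg Fin.val u
            omega
          simp [Pi.single_apply, h1, h3]
        · simp [Pi.single_apply, h1, h2]
    · simp
  have hlin : ∀ m0, g (Sum.inl m0) = 0 := by
    intro m0
    have := key (Classical.arbitrary V) m0
    rw [hker] at this
    linarith
  intro j
  cases j with
  | inl m => exact hlin m
  | inr pa => exact hpair pa

lemma maxwell_aux {V : Type*} [Fintype V] [DecidableEq V] [Nonempty V] {k : ℕ}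
    (q : V → Fin k → ℝ)
    (hspan : Submodule.span ℝ (Set.range fun vw : V × V => q vw.1 - q vw.2) = ⊤)
    {ι : Type*} [Fintype ι] (a b : ι → V) (hab : ∀ i, a i ≠ b i)
    (hindep : LinearIndependent ℝ (fun i : ι => (fun v : V =>
        (if v = a i then q (a i) - q (b i) else 0) +
        (if v = b i then q (b i) - q (a i) else 0)))) :
    2 * Fintype.card ι + k * (k + 1) ≤ 2 * (Fintype.card V * k) := by
  set R : ι → V → Fin k → ℝ := fun i => (fun v =>
        (if v = a i then q (a i) - q (b i) else 0) +
        (if v = b i then q (b i) - q (a i) else 0)) with hR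
  set T := Sum.elim
      (fun m : Fin k => (fun _ : V => Pi.single m (1:ℝ)))
      (fun pa : {pa : Fin k × Fin k // pa.1 < pa.2} =>
        (fun v : V => Pi.single pa.1.1 (q v pa.1.2) - Pi.single pa.1.2 (q v pa.1.1))) with hT
  have hTind := triv_indep q hspan
  -- evaluation of the pairing against a row
  have hrow : ∀ (i : ι) (y : V → Fin k → ℝ), mxPair (R i) y =
      (∑ m, (q (a i) m - q (b i) m) * y (a i) m)
        - ∑ m, (q (a i) m - q (b i) m) * y (b i) m := by
    intro i y
    unfold mxPair
    rw [← Finset.sum_subset (Finset.subset_univ ({a i, b i} : Finset V))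
      (fun v _ hv => ?_)]
    · rw [Finset.sum_pair (hab i)]
      have A : ∑ m, R i (a i) m * y (a i) m
          = ∑ m, (q (a i) m - q (b i) m) * y (a i) m :=
        Finset.sum_congr rfl fun m _ => by
          simp [hR, hab i, ite_apply, Pi.add_apply, Pi.sub_apply]
      have B : ∑ m, R i (b i) m * y (b i) m
          = ∑ m, -((q (a i) m - q (b i) m) * y (b i) m) :=
        Finset.sum_congr rfl fun m _ => by
          simp [hR, (hab i).symm, ite_apply, Pi.add_apply, Pi.sub_apply]
          ring
      rw [A, B, Finset.sum_neg_distrib]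
      ring
    · have hv' : v ≠ a i ∧ v ≠ b i := by
        constructor <;> (intro h; apply hv; simp [h])
      refine Finset.sum_eq_zero fun m _ => ?_
      simp [hR, hv'.1, hv'.2]
  have horth : ∀ (i : ι) j, mxPair (R i) (T j) = 0 := by
    intro i j
    cases j with
    | inl m0 =>
      rw [hrow i]
      simp [hT]
    | inr pa =>
      rw [hrow i]
      simp only [hT, Sum.elim_inr, Pi.sub_apply, Pi.single_apply, mul_sub, mul_ite, mul_zero,
        Finset.sum_sub_distrib, Finset.sum_ite_eq', Finset.mem_univ, if_true]
      ring
  -- combined independence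
  have hcomb : LinearIndependent ℝ (Sum.elim R T) := by
    rw [Fintype.linearIndependent_iff]
    intro g hg
    rw [Fintype.sum_sum_type] at hg
    simp only [Sum.elim_inl, Sum.elim_inr] at hg
    have hyT : ∑ i : ι, g (Sum.inl i) • R i = ∑ j, (-g (Sum.inr j)) • T j := by
      have h2 := eq_neg_of_add_eq_zero_left hg
      rw [h2, ← Finset.sum_neg_distrib]
      exact Finset.sum_congr rfl fun j _ => (neg_smul _ _).symm
    have hPyT : ∀ j0, mxPair (∑ i : ι, g (Sum.inl i) • R i) (T j0) = 0 := by
      intro j0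
      rw [mxPair_sum_left]
      exact Finset.sum_eq_zero fun i _ => by rw [horth i j0, mul_zero]
    have hPyy : mxPair (∑ i : ι, g (Sum.inl i) • R i) (∑ i : ι, g (Sum.inl i) • R i) = 0 := by
      nth_rewrite 2 [hyT]
      rw [mxPair_sum_right]
      exact Finset.sum_eq_zero fun j _ => by rw [hPyT j, mul_zero]
    have hy0 : ∑ i : ι, g (Sum.inl i) • R i = 0 := mxPair_self_eq_zero hPyy
    have hc : ∀ i, g (Sum.inl i) = 0 :=
      Fintype.linearIndependent_iff.1 hindep _ hy0
    have hgT : ∑ j, g (Sum.inr j) • T j = 0 := by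
      rw [Finset.sum_eq_zero (fun i _ => by rw [hc i, zero_smul]), zero_add] at hg
      exact hg
    have hr : ∀ j, g (Sum.inr j) = 0 :=
      Fintype.linearIndependent_iff.1 hTind _ hgT
    rintro (i | j)
    · exact hc i
    · exact hr j
  -- cardinality count
  have hcard := hcomb.fintype_card_le_finrank
  have hfr : Module.finrank ℝ (V → Fin k → ℝ) = Fintype.card V * k := by
    rw [Module.finrank_pi_fintype]
    simp [Module.finrank_pi]
  have epair : {pa : Fin k × Fin k // pa.1 < pa.2} ≃ (Σ j : Fin k, Fin j.1) :=
    { toFun := fun x => ⟨x.1.2, ⟨x.1.1.1, x.2⟩⟩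
      invFun := fun s => ⟨(⟨s.2.1, lt_trans s.2.2 s.1.2⟩, s.1), s.2.2⟩
      left_inv := fun x => rfl
      right_inv := fun s => rfl }
  have hCc : Fintype.card {pa : Fin k × Fin k // pa.1 < pa.2} * 2 = k * (k - 1) := by
    rw [Fintype.card_congr epair, Fintype.card_sigma]
    simp only [Fintype.card_fin]
    rw [Fin.sum_univ_eq_sum_range (fun i => i) k]
    exact Finset.sum_range_id_mul_two k
  have hkk : k * (k + 1) = 2 * k + k * (k - 1) := by
    cases k with
    | zero => rfl
    | succ m => simp [Nat.succ_sub_one]; ring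
  rw [hfr] at hcard
  rw [Fintype.card_sum, Fintype.card_sum, Fintype.card_fin] at hcard
  omega

end MaxwellAux

/-- The framework `(G, p)` is stress-free: every equilibrium stress
(a symmetric assignment of scalars to edges whose weighted differences sum to zero
at every vertex) is identically zero. -/
def IsStressFree {V : Type*} [Fintype V] {d : ℕ} (G : SimpleGraph V)
    (p : V → EuclideanSpace ℝ (Fin d)) : Prop :=
  ∀ σ : V → V → ℝ,
    (∀ v w, σ v w = σ w v) →
    (∀ v w, ¬ G.Adj v w → σ v w = 0) →
    (∀ v, ∑ w : V, σ v w • (p v - p w) = 0) →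
    ∀ v w, σ v w = 0

/-- Maxwell's bound: a stress-free framework in `ℝ^d` on at least `d` vertices has at
most `d·|V| − d(d+1)/2` edges. -/
theorem maxwell_count {V : Type*} [Fintype V] {d : ℕ} (G : SimpleGraph V)
    (p : V → EuclideanSpace ℝ (Fin d)) (hsf : IsStressFree G p)
    (hV : d ≤ Fintype.card V) :
    (G.edgeSet.ncard : ℤ) ≤ d * Fintype.card V - d * (d + 1) / 2 := by
  classical
  rcases isEmpty_or_nonempty V with hV0 | hV0
  · have hcV : Fintype.card V = 0 := Fintype.card_eq_zero
    have hd : d = 0 := by omega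
    have hE : G.edgeSet = ∅ := by
      apply Set.eq_empty_iff_forall_notMem.mpr
      intro e
      induction e using Sym2.ind with
      | _ x y => exact fun _ => IsEmpty.elim hV0 x
    subst hd
    rw [hE]
    simp
  · -- main case
    set U := Submodule.span ℝ (Set.range fun vw : V × V => p vw.1 - p vw.2) with hU
    have memd : ∀ v w : V, p v - p w ∈ U := fun v w => Submodule.subset_span ⟨(v, w), rfl⟩
    set k := Module.finrank ℝ U with hk
    have hkd : k ≤ d := by
      have h := Submodule.finrank_le U
      rwa [finrank_euclideanSpace_fin] at h
    obtain ⟨bU⟩ : Nonempty (Module.Basis (Fin k) ℝ U) := ⟨Module.finBasisOfFinrankEq ℝ U hk.symm⟩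
    set v₀ := Classical.arbitrary V with hv₀
    set q : V → Fin k → ℝ := fun v => bU.equivFun ⟨p v - p v₀, memd v v₀⟩ with hqdef
    have hq : ∀ x y : V, q x - q y = bU.equivFun ⟨p x - p y, memd x y⟩ := by
      intro x y
      have hsub : (⟨p x - p v₀, memd x v₀⟩ : U) - ⟨p y - p v₀, memd y v₀⟩
          = ⟨p x - p y, memd x y⟩ := by
        apply Subtype.ext
        simp [sub_sub_sub_cancel_right]
      rw [hqdef]
      dsimp only
      rw [← map_sub, hsub]
    -- the coordinates span everything
    have hDspan : Submodule.span ℝ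
        (Set.range (fun vw : V × V => (⟨p vw.1 - p vw.2, memd vw.1 vw.2⟩ : U))) = ⊤ := by
      apply Submodule.map_injective_of_injective (Submodule.injective_subtype U)
      rw [Submodule.map_span, Submodule.map_top, Submodule.range_subtype, ← Set.range_comp]
      exact hU.symm
    have hspan : Submodule.span ℝ (Set.range fun vw : V × V => q vw.1 - q vw.2) = ⊤ := by
      have hrange : (Set.range fun vw : V × V => q vw.1 - q vw.2)
          = ⇑(bU.equivFun.toLinearMap)
            '' (Set.range (fun vw : V × V => (⟨p vw.1 - p vw.2, memd vw.1 vw.2⟩ : U))) := by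
        rw [← Set.range_comp]
        apply congrArg
        funext vw
        exact hq vw.1 vw.2
      rw [hrange, ← Submodule.map_span, hDspan, Submodule.map_top, LinearMap.range_eq_top]
      exact bU.equivFun.surjective
    -- edge endpoints
    have hendp : ∀ e : ↥G.edgeSet, ∃ vw : V × V,
        (e : Sym2 V) = s(vw.1, vw.2) ∧ G.Adj vw.1 vw.2 := by
      rintro ⟨e, he⟩
      induction e using Sym2.ind with
      | _ x y => exact ⟨(x, y), rfl, he⟩
    choose ab hab1 hab2 using hendp
    set a : ↥G.edgeSet → V := fun e => (ab e).1 with ha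
    set b : ↥G.edgeSet → V := fun e => (ab e).2 with hb
    have hne : ∀ e, a e ≠ b e := fun e => (hab2 e).ne
    have hab1' : ∀ e : ↥G.edgeSet, (e : Sym2 V) = s(a e, b e) := hab1
    have hab2' : ∀ e : ↥G.edgeSet, G.Adj (a e) (b e) := hab2
    -- linear independence of the coordinate rows
    have hindep : LinearIndependent ℝ (fun e : ↥G.edgeSet => (fun v : V =>
        (if v = a e then q (a e) - q (b e) else 0) +
        (if v = b e then q (b e) - q (a e) else 0))) := by
      rw [Fintype.linearIndependent_iff]
      intro c hc
      set σ : V → V → ℝ := fun v w =>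
        if h : G.Adj v w then c ⟨s(v, w), h⟩ else 0 with hσ
      have hσsymm : ∀ v w, σ v w = σ w v := by
        intro v w
        simp only [hσ]
        by_cases h : G.Adj v w
        · rw [dif_pos h, dif_pos h.symm]
          congr 1
          exact Subtype.ext (Sym2.eq_swap)
        · rw [dif_neg h, dif_neg fun h' => h h'.symm]
      have hσsupp : ∀ v w, ¬G.Adj v w → σ v w = 0 := by
        intro v w h
        simp only [hσ]
        exact dif_neg h
      -- the map back to Euclidean space
      set Λ : (Fin k → ℝ) →ₗ[ℝ] EuclideanSpace ℝ (Fin d) :=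
        U.subtype ∘ₗ (bU.equivFun.symm : (Fin k → ℝ) ≃ₗ[ℝ] U).toLinearMap with hΛ
      have hLam : ∀ x y : V, Λ (q x - q y) = p x - p y := by
        intro x y
        rw [hq x y, hΛ]
        change U.subtype (bU.equivFun.symm (bU.equivFun ⟨p x - p y, memd x y⟩)) = _
        rw [LinearEquiv.symm_apply_apply]
        rfl
      have hσeq : ∀ v, ∑ w : V, σ v w • (p v - p w) = 0 := by
        intro v
        have hv := congrFun hc v
        rw [Finset.sum_apply] at hv
        simp only [Pi.smul_apply, Pi.zero_apply] at hv
        have hΛv := congrArg Λ hv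
        rw [map_sum, map_zero] at hΛv
        have hRp : ∀ e : ↥G.edgeSet, Λ (c e • ((if v = a e then q (a e) - q (b e) else 0) +
            (if v = b e then q (b e) - q (a e) else 0)))
            = c e • ((if v = a e then p (a e) - p (b e) else 0) +
              (if v = b e then p (b e) - p (a e) else 0)) := by
          intro e
          rw [map_smul, map_add, apply_ite Λ, apply_ite Λ, map_zero, hLam, hLam]
        rw [Finset.sum_congr rfl fun e _ => hRp e] at hΛv
        have hother : ∀ (w : V) (hadj : G.Adj v w) (hmem : s(v, w) ∈ G.edgeSet),
            (if v = a ⟨s(v, w), hmem⟩ then b ⟨s(v, w), hmem⟩ else a ⟨s(v, w), hmem⟩) = w := by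
          intro w hadj hmem
          have h1 := hab1' ⟨s(v, w), hmem⟩
          rw [Sym2.eq_iff] at h1
          have hvw : v ≠ w := hadj.ne
          rcases h1 with ⟨h1, h2⟩ | ⟨h1, h2⟩
          · rw [if_pos h1, ← h2]
          · rw [if_neg fun h' => hvw (h'.trans h2.symm), ← h2]
        have hadjother : ∀ (w : V) (hadj : G.Adj v w) (hmem : s(v, w) ∈ G.edgeSet) (e : ↥G.edgeSet),
            e = ⟨s(v, w), hmem⟩ → (v = a e ∨ v = b e) := by
          rintro w hadj hmem e rfl
          have h1 := hab1' ⟨s(v, w), hmem⟩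
          rw [Sym2.eq_iff] at h1
          rcases h1 with ⟨h1, h2⟩ | ⟨h1, h2⟩
          · left; exact h1
          · right; exact h1
        have hval : ∀ (w : V) (hadj : G.Adj v w) (hmem : s(v, w) ∈ G.edgeSet),
            σ v w • (p v - p w) = c ⟨s(v, w), hmem⟩ •
              ((if v = a ⟨s(v, w), hmem⟩ then p (a ⟨s(v, w), hmem⟩) - p (b ⟨s(v, w), hmem⟩) else 0) +
               (if v = b ⟨s(v, w), hmem⟩ then p (b ⟨s(v, w), hmem⟩) - p (a ⟨s(v, w), hmem⟩) else 0)) := by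
          intro w hadj hmem
          have hcc : σ v w = c ⟨s(v, w), hmem⟩ := by
            simp only [hσ]
            rw [dif_pos hadj]
          have h1 := hab1' ⟨s(v, w), hmem⟩
          rw [Sym2.eq_iff] at h1
          have hvw : v ≠ w := hadj.ne
          rcases h1 with ⟨h1, h2⟩ | ⟨h1, h2⟩
          · rw [hcc, if_pos h1, if_neg fun h' => hvw (h'.trans h2.symm), add_zero, ← h1, ← h2]
          · rw [hcc, if_neg fun h' => hvw (h'.trans h2.symm), if_pos h1, zero_add, ← h1, ← h2]
        -- now exchange the edge sum for a vertex sum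
        rw [← Finset.sum_subset (Finset.filter_subset (fun w => G.Adj v w) Finset.univ)
          (fun w _ hw => ?_)]
        swap
        · rw [Finset.mem_filter, not_and] at hw
          have : ¬ G.Adj v w := fun h => hw (Finset.mem_univ w) h
          rw [hσsupp v w this, zero_smul]
        rw [← hΛv, ← Finset.sum_subset
          (Finset.filter_subset (fun e : ↥G.edgeSet => v = a e ∨ v = b e) Finset.univ)
          (fun e _ he => ?_)]
        swap
        · rw [Finset.mem_filter, not_and, not_or] at he
          obtain ⟨h1, h2⟩ := he (Finset.mem_univ e)
          rw [if_neg h1, if_neg h2, add_zero, smul_zero]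
        refine Finset.sum_bij' (fun w hw => (⟨s(v, w), by
            rw [Finset.mem_filter] at hw
            exact hw.2⟩ : ↥G.edgeSet))
          (fun e he => if v = a e then b e else a e) ?_ ?_ ?_ ?_ ?_
        · intro w hw
          rw [Finset.mem_filter] at hw ⊢
          exact ⟨Finset.mem_univ _, hadjother w hw.2 _ _ rfl⟩
        · intro e he
          rw [Finset.mem_filter] at he ⊢
          refine ⟨Finset.mem_univ _, ?_⟩
          by_cases h2 : v = a e
          · rw [if_pos h2, h2]
            exact hab2 e
          · rw [if_neg h2]
            rcases he.2 with h1 | h1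
            · exact absurd h1 h2
            · rw [h1]
              exact (hab2 e).symm
        · intro w hw
          rw [Finset.mem_filter] at hw
          exact hother w hw.2 _
        · intro e he
          rw [Finset.mem_filter] at he
          apply Subtype.ext
          dsimp only
          by_cases h2 : v = a e
          · rw [if_pos h2, hab1 e, h2]
          · rw [if_neg h2]
            rcases he.2 with h1 | h1
            · exact absurd h1 h2
            · rw [h1, hab1 e]
              exact Sym2.eq_swap
        · intro w hw
          rw [Finset.mem_filter] at hw
          exact hval w hw.2 _
      have hzero := hsf σ hσsymm hσsupp hσeq
      intro e
      have h1 : c e = σ (a e) (b e) := by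
        simp only [hσ]; rw [dif_pos (hab2 e)]
        apply congrArg
        apply Subtype.ext
        rw [hab1' e]
      rw [h1]
      exact hzero _ _
    have key := maxwell_aux q hspan a b hne hindep
    -- cardinalities
    have hEcard : G.edgeSet.ncard = Fintype.card ↥G.edgeSet := by
      rw [← Nat.card_coe_set_eq, Nat.card_eq_fintype_card]
    -- final arithmetic over ℤ
    have hkZ : (k : ℤ) ≤ d := by exact_mod_cast hkd
    have hdZ : (d : ℤ) ≤ Fintype.card V := by exact_mod_cast hV
    have keyZ : 2 * (G.edgeSet.ncard : ℤ) + k * (k + 1) ≤ 2 * (Fintype.card V * k) := by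
      rw [hEcard]
      exact_mod_cast key
    obtain ⟨m, hm⟩ : ∃ m : ℤ, (d : ℤ) * (d + 1) = 2 * m := by
      rcases Int.even_mul_succ_self (d : ℤ) with ⟨r, hr⟩
      exact ⟨r, by omega⟩
    have hdiv : (d : ℤ) * (d + 1) / 2 = m := by
      rw [hm, Int.mul_ediv_cancel_left _ (by norm_num)]
    rw [hdiv]
    have hstep : 2 * ((Fintype.card V : ℤ) * k) - k * (k + 1)
        ≤ 2 * ((Fintype.card V : ℤ) * d) - d * (d + 1) := by
      nlinarith [mul_nonneg (sub_nonneg.2 hkZ) (sub_nonneg.2 hdZ),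
        mul_self_nonneg ((d : ℤ) - k), sub_nonneg.2 hkZ]
    linarith

end
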